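/- Let P be a poset. Then P is a quasicontinuous poset if and only if the complete lattice Γ(P) of Scott closed subsets of P (ordered by inclusion) is a quasicontinuous lattice. -/

import Mathlib

set_option linter.unusedSectionVars false

open Topology TopologicalSpace Set

/-- A poset is quasicontinuous if for every point `x` and every Scott open set `U` containing
`x` there is a nonempty finite set `F` with `x ∈ int_σ(↑F) ⊆ ↑F ⊆ U`. -/
def QuasicontinuousPoset (α : Type*) [Preorder α] : Prop :=
  ∀ (x : α) (U : Set α), IsOpen[Topology.scott α Set.univ] U → x ∈ U →
    ∃ F : Set α, F.Finite ∧ F.Nonempty ∧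
      x ∈ @interior α (Topology.scott α Set.univ) ↑(upperClosure F) ∧
      (↑(upperClosure F) : Set α) ⊆ U

lemma quasicontinuousPoset_iff_inst {α : Type*} [Preorder α] [TopologicalSpace α]
    [Topology.IsScott α Set.univ] :
    QuasicontinuousPoset α ↔ ∀ (x : α) (U : Set α), IsOpen U → x ∈ U →
      ∃ F : Set α, F.Finite ∧ F.Nonempty ∧ x ∈ interior ↑(upperClosure F) ∧
        (↑(upperClosure F) : Set α) ⊆ U := by
  unfold QuasicontinuousPoset
  rw [← Topology.IsScott.topology_eq α Set.univ]


section RudinLemma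
variable {X : Type*} [Preorder X] {I : Type*}

/-- Sections of a subset of `I × X`. -/
private def sec (E : Set (I × X)) (i : I) : Set X := {x | (i, x) ∈ E}

theorem rudin_lemma [Nonempty I] (R : I → I → Prop)
    (htrans : ∀ {a b c}, R a b → R b c → R a c)
    (hdir : ∀ i j, ∃ k, R i k ∧ R j k)
    (F : I → Set X) (hfin : ∀ i, (F i).Finite) (hne : ∀ i, (F i).Nonempty)
    (hmono : ∀ i j, R i j → ∀ y ∈ F j, ∃ x ∈ F i, x ≤ y) :
    ∃ D : Set X, D.Nonempty ∧ DirectedOn (· ≤ ·) D ∧ (∀ i, (D ∩ F i).Nonempty) ∧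
      (∀ d ∈ D, ∃ i, d ∈ F i) := by
  classical
  set S : Set (Set (I × X)) :=
    {E | (∀ i, sec E i ⊆ F i) ∧ (∀ i, (sec E i).Nonempty) ∧
      (∀ i j, R i j → ∀ y ∈ sec E j, ∃ x ∈ sec E i, x ≤ y)} with hS
  -- Zorn's lemma: find a minimal good family
  have hzorn : ∃ M, M ⊆ {p : I × X | p.2 ∈ F p.1} ∧ Minimal (· ∈ S) M := by
    apply zorn_superset_nonempty
    · intro c hcS hchain hcne
      refine ⟨⋂₀ c, ?_, fun s hs => sInter_subset_of_mem hs⟩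
      -- key: each section of the intersection is attained by a member of the chain
      have key : ∀ i, ∃ E ∈ c, sec (⋂₀ c) i = sec E i := by
        intro i
        obtain ⟨a, ⟨E₁, hE₁c, rfl⟩, hmin⟩ :=
          Set.Finite.exists_minimal
            (((hfin i).finite_subsets).subset (by
              rintro _ ⟨E, hEc, rfl⟩
              exact (hcS hEc).1 i)) (hcne.image _)
        refine ⟨E₁, hE₁c, Subset.antisymm ?_ ?_⟩
        · intro x hx
          exact hx E₁ hE₁c
        · intro x hx E hEc
          rcases hchain.total hE₁c hEc with h | h
          · exact h hx
          · have : sec E i ⊆ sec E₁ i := fun y hy => h hy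
            have h2 : sec E₁ i = sec E i := Subset.antisymm (hmin ⟨E, hEc, rfl⟩ this) this
            have hx2 : x ∈ sec E i := by rw [← h2]; exact hx
            exact hx2
      refine ⟨fun i => ?_, fun i => ?_, fun i j hij y hy => ?_⟩
      · obtain ⟨E, hEc, hE⟩ := key i
        rw [hE]
        exact (hcS hEc).1 i
      · obtain ⟨E, hEc, hE⟩ := key i
        rw [hE]
        exact (hcS hEc).2.1 i
      · obtain ⟨E₁, hE₁c, hE₁⟩ := key i
        obtain ⟨E₂, hE₂c, hE₂⟩ := key j
        rcases hchain.total hE₁c hE₂c with h | h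
        · -- E₁ ⊆ E₂ : use goodness of E₁
          have hy' : y ∈ sec E₁ j := sInter_subset_of_mem hE₁c hy
          obtain ⟨x, hx, hxy⟩ := (hcS hE₁c).2.2 i j hij y hy'
          exact ⟨x, by rw [hE₁]; exact hx, hxy⟩
        · -- E₂ ⊆ E₁
          have hy' : y ∈ sec E₂ j := by rw [← hE₂]; exact hy
          obtain ⟨x, hx, hxy⟩ := (hcS hE₂c).2.2 i j hij y hy'
          refine ⟨x, by rw [hE₁]; exact h hx, hxy⟩
    · exact ⟨fun i => fun x hx => hx, fun i => hne i, fun i j hij y hy => hmono i j hij y hy⟩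
  obtain ⟨M, -, hMS, hMmin⟩ := hzorn
  obtain ⟨hMsub, hMne, hMcoh⟩ := hMS
  -- minimality in usable form
  have hmin : ∀ E ∈ S, E ⊆ M → ∀ i, sec M i ⊆ sec E i := by
    intro E hES hEM i x hx
    exact hMmin hES hEM hx
  -- cofinality
  have hcof : ∀ i, ∀ x ∈ sec M i, ∀ k, ∃ l, R k l ∧ ∃ z ∈ sec M l, x ≤ z := by
    by_contra h
    push_neg at h
    obtain ⟨i, x, hx, k, hk⟩ := h
    set E : Set (I × X) :=
      {p | p.2 ∈ sec M p.1 ∧ ∃ l, R p.1 l ∧ R k l ∧ ∃ z ∈ sec M l, p.2 ≤ z} with hE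
    have hES : E ∈ S := by
      refine ⟨fun j => fun y hy => hMsub j hy.1, fun j => ?_, fun j₁ j₂ hj y hy => ?_⟩
      · obtain ⟨l, hjl, hkl⟩ := hdir j k
        obtain ⟨z, hz⟩ := hMne l
        obtain ⟨w, hw, hwz⟩ := hMcoh j l hjl z hz
        exact ⟨w, hw, l, hjl, hkl, z, hz, hwz⟩
      · obtain ⟨hy1, l, hl1, hl2, z, hz, hyz⟩ := hy
        obtain ⟨w, hw, hwy⟩ := hMcoh j₁ j₂ hj y hy1
        exact ⟨w, ⟨hw, l, htrans hj hl1, hl2, z, hz, le_trans hwy hyz⟩, hwy⟩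
    have hEM : E ⊆ M := fun p hp => hp.1
    obtain ⟨-, l, -, hkl, z, hz, hxz⟩ := hmin E hES hEM i hx
    exact hk l hkl z hz hxz
  -- directedness
  have hdirM : DirectedOn (· ≤ ·) (⋃ i, sec M i) := by
    rintro x ⟨_, ⟨i, rfl⟩, hx⟩ y ⟨_, ⟨j, rfl⟩, hy⟩
    set E : Set (I × X) :=
      {p | p.2 ∈ sec M p.1 ∧ ∃ l, R p.1 l ∧ ∃ z ∈ sec M l, p.2 ≤ z ∧ x ≤ z} with hE
    have hES : E ∈ S := by
      refine ⟨fun j' => fun y' hy' => hMsub j' hy'.1, fun j' => ?_, fun j₁ j₂ hj y' hy' => ?_⟩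
      · obtain ⟨l, hjl, z, hz, hxz⟩ := hcof i x hx j'
        obtain ⟨w, hw, hwz⟩ := hMcoh j' l hjl z hz
        exact ⟨w, hw, l, hjl, z, hz, hwz, hxz⟩
      · obtain ⟨hy1, l, hl1, z, hz, hyz, hxz⟩ := hy'
        obtain ⟨w, hw, hwy⟩ := hMcoh j₁ j₂ hj y' hy1
        exact ⟨w, ⟨hw, l, htrans hj hl1, z, hz, le_trans hwy hyz, hxz⟩, hwy⟩
    have hEM : E ⊆ M := fun p hp => hp.1
    obtain ⟨-, l, -, z, hz, hyz, hxz⟩ := hmin E hES hEM j hy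
    exact ⟨z, mem_iUnion.2 ⟨l, hz⟩, hxz, hyz⟩
  refine ⟨⋃ i, sec M i, ?_, hdirM, fun i => ?_, fun d hd => ?_⟩
  · obtain ⟨i⟩ := ‹Nonempty I›
    obtain ⟨x, hx⟩ := hMne i
    exact ⟨x, mem_iUnion.2 ⟨i, hx⟩⟩
  · obtain ⟨x, hx⟩ := hMne i
    exact ⟨x, mem_iUnion.2 ⟨i, hx⟩, hMsub i hx⟩
  · obtain ⟨i, hdi⟩ := mem_iUnion.mp hd
    exact ⟨i, hMsub i hdi⟩


end RudinLemma

section Infra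
variable {P : Type*} [PartialOrder P] [TopologicalSpace P] [Topology.IsScott P Set.univ]

instance closedsTop : TopologicalSpace (Closeds P) := Topology.scott (Closeds P) Set.univ
instance closedsScott : Topology.IsScott (Closeds P) Set.univ := ⟨rfl⟩

lemma closeds_isLower (C : Closeds P) : IsLowerSet (C : Set P) :=
  Topology.IsScott.isLowerSet_of_isClosed C.isClosed

def pIic (x : P) : Closeds P := ⟨Iic x, isClosed_Iic⟩

lemma pIic_mono {a b : P} (hab : a ≤ b) : pIic a ≤ pIic b :=
  SetLike.coe_subset_coe.mp (Iic_subset_Iic.mpr hab)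

lemma isClosed_lowerClosure_finite {s : Set P} (hs : s.Finite) :
    IsClosed (↑(lowerClosure s) : Set P) := by
  rw [coe_lowerClosure]
  exact hs.isClosed_biUnion fun a _ => isClosed_Iic

def lcF (G : Finset P) : Closeds P :=
  ⟨↑(lowerClosure (G : Set P)), isClosed_lowerClosure_finite G.finite_toSet⟩

lemma coe_sSup' (S : Set (Closeds P)) :
    ((sSup S : Closeds P) : Set P) = closure (⋃ C ∈ S, (C : Set P)) := by
  rw [Closeds.coe_sSup, sUnion_image]

lemma isOpen_diamond {V : Set P} (hV : IsOpen V) :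
    IsOpen {C : Closeds P | ((C : Set P) ∩ V).Nonempty} := by
  rw [Topology.IsScott.isOpen_iff_isUpperSet_and_dirSupInaccOn (D := Set.univ)]
  constructor
  · rintro C C' h ⟨x, hxC, hxV⟩
    exact ⟨x, SetLike.coe_subset_coe.mpr h hxC, hxV⟩
  · rintro d - hd₁ hd₂ A hA ⟨x, hxA, hxV⟩
    have hsup : (A : Set P) = closure (⋃ C ∈ d, (C : Set P)) := by
      rw [← hA.sSup_eq, coe_sSup']
    rw [hsup] at hxA
    obtain ⟨y, hyV, hyU⟩ := mem_closure_iff.mp hxA V hV hxV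
    obtain ⟨C, hCd, hyC⟩ := mem_iUnion₂.mp hyU
    exact ⟨C, hCd, y, hyC, hyV⟩

lemma exists_finset_lcF_mem {𝒰 : Set (Closeds P)} (h𝒰 : IsOpen 𝒰) {A : Closeds P}
    (hA : A ∈ 𝒰) :
    ∃ G : Finset P, (G : Set P) ⊆ (A : Set P) ∧ lcF G ∈ 𝒰 := by
  classical
  set d : Set (Closeds P) := {C | ∃ G : Finset P, (G : Set P) ⊆ (A : Set P) ∧ C = lcF G}
    with hd
  have hub : ∀ C ∈ d, C ≤ A := by
    rintro C ⟨G, hG, rfl⟩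
    exact SetLike.coe_subset_coe.mp (lowerClosure_min hG (closeds_isLower A))
  have hlub : IsLUB d A := by
    constructor
    · exact hub
    · intro B hB
      apply SetLike.coe_subset_coe.mp
      intro a ha
      have : lcF {a} ∈ d := ⟨{a}, by simpa using ha, rfl⟩
      have h2 := hB this
      exact SetLike.coe_subset_coe.mpr h2 (by simp [lcF])
  have hdne : d.Nonempty := ⟨lcF ∅, ∅, by simp, rfl⟩
  have hddir : DirectedOn (· ≤ ·) d := by
    rintro C₁ ⟨G₁, hG₁, rfl⟩ C₂ ⟨G₂, hG₂, rfl⟩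
    refine ⟨lcF (G₁ ∪ G₂), ⟨G₁ ∪ G₂, by simp [union_subset_iff, *], rfl⟩, ?_, ?_⟩ <;>
    · apply SetLike.coe_subset_coe.mp
      apply lowerClosure_mono
      simp [Finset.coe_union]
  obtain ⟨C, hCd, hC𝒰⟩ :=
    ((Topology.IsScott.isOpen_iff_isUpperSet_and_dirSupInaccOn (D := Set.univ)).mp h𝒰).2
      trivial hdne hddir hlub hA
  obtain ⟨G, hG, rfl⟩ := hCd
  exact ⟨G, hG, hC𝒰⟩


lemma qc_of_qc_closeds
    (h : ∀ (A : Closeds P) (𝒰 : Set (Closeds P)), IsOpen 𝒰 → A ∈ 𝒰 →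
      ∃ F : Set (Closeds P), F.Finite ∧ F.Nonempty ∧
        A ∈ interior ↑(upperClosure F) ∧ (↑(upperClosure F) : Set (Closeds P)) ⊆ 𝒰) :
    ∀ (x : P) (U : Set P), IsOpen U → x ∈ U → ∃ F : Set P, F.Finite ∧ F.Nonempty ∧
      x ∈ interior ↑(upperClosure F) ∧ (↑(upperClosure F) : Set P) ⊆ U := by
  intro x U hU hxU
  obtain ⟨ℱ, hfin, hne, hint, hsub⟩ :=
    h (pIic x) {C | ((C : Set P) ∩ U).Nonempty} (isOpen_diamond hU)
      ⟨x, by simp [pIic], hxU⟩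
  have hsel : ∀ C ∈ ℱ, ∃ y, y ∈ (C : Set P) ∩ U := fun C hC =>
    hsub (subset_upperClosure hC)
  have : Nonempty P := ⟨x⟩
  choose! f hf using hsel
  refine ⟨f '' ℱ, hfin.image _, hne.image _, ?_, ?_⟩
  · set V : Set P := {y | pIic y ∈ interior (↑(upperClosure ℱ) : Set (Closeds P))} with hVdef
    have hVopen : IsOpen V := by
      rw [Topology.IsScott.isOpen_iff_isUpperSet_and_dirSupInaccOn (D := Set.univ)]
      constructor
      · intro a b hab ha
        exact (Topology.IsScott.isUpperSet_of_isOpen (D := Set.univ) isOpen_interior)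
          (pIic_mono hab) ha
      · rintro d - hd₁ hd₂ a hda haV
        have hlub : IsLUB (pIic '' d) (pIic a) := by
          constructor
          · rintro _ ⟨z, hz, rfl⟩
            exact pIic_mono (hda.1 hz)
          · intro B hB
            apply SetLike.coe_subset_coe.mp
            have hdB : d ⊆ (B : Set P) := fun z hz =>
              SetLike.coe_subset_coe.mpr (hB ⟨z, hz, rfl⟩) (by simp [pIic])
            have haB : a ∈ (B : Set P) :=
              Topology.IsScott.dirSupClosed_of_isClosed B.isClosed hdB hd₁ hd₂ hda
            exact fun y hy => closeds_isLower B hy haB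
        have hddir : DirectedOn (· ≤ ·) (pIic '' d) := by
          rintro _ ⟨z₁, hz₁, rfl⟩ _ ⟨z₂, hz₂, rfl⟩
          obtain ⟨z₃, hz₃, h₁, h₂⟩ := hd₂ z₁ hz₁ z₂ hz₂
          exact ⟨pIic z₃, ⟨z₃, hz₃, rfl⟩, pIic_mono h₁, pIic_mono h₂⟩
        obtain ⟨_, ⟨z, hz, rfl⟩, hmem⟩ :=
          ((Topology.IsScott.isOpen_iff_isUpperSet_and_dirSupInaccOn (D := Set.univ)).mp
            isOpen_interior).2 trivial (hd₁.image _) hddir hlub haV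
        exact ⟨z, hz, hmem⟩
    have hVsub : V ⊆ ↑(upperClosure (f '' ℱ)) := by
      intro y hy
      have : pIic y ∈ (upperClosure ℱ : Set (Closeds P)) := interior_subset hy
      obtain ⟨C, hC, hCy⟩ := this
      have hfC := hf C hC
      exact ⟨f C, mem_image_of_mem f hC, (SetLike.coe_subset_coe.mpr hCy hfC.1 : f C ∈ Iic y)⟩
    exact interior_maximal hVsub hVopen hint
  · rintro y ⟨_, ⟨C, hC, rfl⟩, hle⟩
    exact Topology.IsScott.isUpperSet_of_isOpen (D := Set.univ) hU hle (hf C hC).2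

/-- The hard direction. -/
lemma qc_closeds_of_qc
    (hP : ∀ (x : P) (U : Set P), IsOpen U → x ∈ U → ∃ F : Set P, F.Finite ∧ F.Nonempty ∧
      x ∈ interior ↑(upperClosure F) ∧ (↑(upperClosure F) : Set P) ⊆ U) :
    ∀ (A : Closeds P) (𝒰 : Set (Closeds P)), IsOpen 𝒰 → A ∈ 𝒰 →
      ∃ F : Set (Closeds P), F.Finite ∧ F.Nonempty ∧
        A ∈ interior ↑(upperClosure F) ∧ (↑(upperClosure F) : Set (Closeds P)) ⊆ 𝒰 := by
  classical
  have hP' : ∀ (x : P) (U : Set P), IsOpen U → x ∈ U → ∃ F : Finset P, F.Nonempty ∧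
      x ∈ interior ↑(upperClosure (F : Set P)) ∧ (↑(upperClosure (F : Set P)) : Set P) ⊆ U := by
    intro x U hU hxU
    obtain ⟨F, hFfin, hFne, hFint, hFsub⟩ := hP x U hU hxU
    refine ⟨hFfin.toFinset, hFfin.toFinset_nonempty.mpr hFne, ?_, ?_⟩
    · rwa [hFfin.coe_toFinset]
    · rwa [hFfin.coe_toFinset]
  intro A 𝒰 h𝒰 hA𝒰
  obtain ⟨G, hGA, hG𝒰⟩ := exists_finset_lcF_mem h𝒰 hA𝒰
  let I := {t : P → Finset P // ∀ g ∈ G, (t g).Nonempty ∧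
    g ∈ interior ↑(upperClosure ((t g : Finset P) : Set P))}
  let R : I → I → Prop := fun t t' => ∀ g ∈ G, ∀ y ∈ t'.1 g, ∃ x ∈ t.1 g, x ≤ y
  have htransR : ∀ {a b c : I}, R a b → R b c → R a c := by
    intro a b c hab hbc g hg y hy
    obtain ⟨z, hz, hzy⟩ := hbc g hg y hy
    obtain ⟨x, hx, hxz⟩ := hab g hg z hz
    exact ⟨x, hx, le_trans hxz hzy⟩
  have hInonempty : Nonempty I := by
    choose t0 h1 h2 h3 using fun g : P => hP' g univ isOpen_univ (mem_univ g)
    exact ⟨⟨t0, fun g _ => ⟨h1 g, h2 g⟩⟩⟩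
  have hdirR : ∀ t t' : I, ∃ t'' : I, R t t'' ∧ R t' t'' := by
    intro t t'
    have hex : ∀ g : P, ∃ Fg : Finset P, g ∈ G → Fg.Nonempty ∧
        g ∈ interior ↑(upperClosure (Fg : Set P)) ∧
        (↑(upperClosure (Fg : Set P)) : Set P) ⊆
          interior ↑(upperClosure ((t.1 g : Finset P) : Set P)) ∩
          interior ↑(upperClosure ((t'.1 g : Finset P) : Set P)) := by
      intro g
      by_cases hg : g ∈ G
      · obtain ⟨Fg, hne, hint, hsub⟩ := hP' g _
          (IsOpen.inter isOpen_interior isOpen_interior) ⟨(t.2 g hg).2, (t'.2 g hg).2⟩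
        exact ⟨Fg, fun _ => ⟨hne, hint, hsub⟩⟩
      · exact ⟨∅, fun h => absurd h hg⟩
    choose tf htf using hex
    refine ⟨⟨tf, fun g hg => ⟨(htf g hg).1, (htf g hg).2.1⟩⟩, ?_, ?_⟩
    · intro g hg y hy
      have hmem : y ∈ (↑(upperClosure ((t.1 g : Finset P) : Set P)) : Set P) :=
        interior_subset ((htf g hg).2.2 (subset_upperClosure hy)).1
      obtain ⟨x, hx, hxy⟩ := hmem
      exact ⟨x, hx, hxy⟩
    · intro g hg y hy
      have hmem : y ∈ (↑(upperClosure ((t'.1 g : Finset P) : Set P)) : Set P) :=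
        interior_subset ((htf g hg).2.2 (subset_upperClosure hy)).2
      obtain ⟨x, hx, hxy⟩ := hmem
      exact ⟨x, hx, hxy⟩
  -- selections
  let X := {g : P // g ∈ G} → P
  let φ : X → Closeds P := fun s =>
    ⟨↑(lowerClosure (Set.range s)), isClosed_lowerClosure_finite (Set.finite_range s)⟩
  have hφmono : ∀ {s s' : X}, s ≤ s' → φ s ≤ φ s' := by
    intro s s' hss
    apply SetLike.coe_subset_coe.mp
    apply lowerClosure_min ?_ (lowerClosure _).lower
    rintro _ ⟨g, rfl⟩
    exact ⟨s' g, ⟨g, rfl⟩, hss g⟩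
  have hrangeφ : ∀ (s : X) (g : {g : P // g ∈ G}), s g ∈ (φ s : Set P) := fun s g =>
    subset_lowerClosure ⟨g, rfl⟩
  -- the key claim, proved by contradiction using Rudin's lemma
  have hclaim : ∃ t : I, ∀ s : X, (∀ g, s g ∈ t.1 g.1) → φ s ∈ 𝒰 := by
    by_contra hcon
    push_neg at hcon
    -- hcon : ∀ t : I, ∃ s : X, (∀ g, s g ∈ t.1 g.1) ∧ φ s ∉ 𝒰
    let FR : I → Set X := fun t => {s | (∀ g, s g ∈ t.1 g.1) ∧ φ s ∉ 𝒰}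
    have hfin : ∀ t, (FR t).Finite := fun t =>
      (Set.Finite.pi' fun g : {g : P // g ∈ G} => (t.1 g.1).finite_toSet).subset
        fun s hs g => Finset.mem_coe.mpr (hs.1 g)
    have hne : ∀ t, (FR t).Nonempty := fun t => hcon t
    have hmono : ∀ t t', R t t' → ∀ s' ∈ FR t', ∃ s ∈ FR t, s ≤ s' := by
      intro t t' hR s' hs'
      have : ∀ g : {g : P // g ∈ G}, ∃ x ∈ t.1 g.1, x ≤ s' g :=
        fun g => hR g.1 g.2 (s' g) (hs'.1 g)
      choose xs hxs1 hxs2 using this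
      have hle : xs ≤ s' := fun g => hxs2 g
      refine ⟨xs, ⟨hxs1, fun hmem => hs'.2 ?_⟩, hle⟩
      exact Topology.IsScott.isUpperSet_of_isOpen (D := Set.univ) h𝒰 (hφmono hle) hmem
    obtain ⟨D, hDne, hDdir, hDmeets, hDsub⟩ :=
      rudin_lemma R htransR hdirR FR hfin hne hmono
    -- the closed complement
    have h𝒞 : IsClosed 𝒰ᶜ := h𝒰.isClosed_compl
    have hφD : (φ '' D).Nonempty := hDne.image φ
    have hφDdir : DirectedOn (· ≤ ·) (φ '' D) := by
      rintro _ ⟨s₁, hs₁, rfl⟩ _ ⟨s₂, hs₂, rfl⟩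
      obtain ⟨s₃, hs₃, h₁, h₂⟩ := hDdir s₁ hs₁ s₂ hs₂
      exact ⟨φ s₃, ⟨s₃, hs₃, rfl⟩, hφmono h₁, hφmono h₂⟩
    have hφDsub : φ '' D ⊆ 𝒰ᶜ := by
      rintro _ ⟨s, hs, rfl⟩
      obtain ⟨t, ht⟩ := hDsub s hs
      exact ht.2
    have hZ : sSup (φ '' D) ∈ 𝒰ᶜ :=
      Topology.IsScott.dirSupClosed_of_isClosed h𝒞 hφDsub hφD hφDdir (isLUB_sSup _)
    -- but `lcF G ≤ sSup (φ '' D)`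
    have hGZ : (G : Set P) ⊆ ((sSup (φ '' D) : Closeds P) : Set P) := by
      intro g hg
      rw [coe_sSup']
      rw [mem_closure_iff]
      intro V hV hgV
      obtain ⟨Fv, hFvne, hgFv, hFvsub⟩ := hP' g V hV hgV
      obtain ⟨tb⟩ := hInonempty
      have htV : ∀ g' ∈ G, (Function.update tb.1 g Fv g').Nonempty ∧
          g' ∈ interior ↑(upperClosure ((Function.update tb.1 g Fv g' : Finset P) : Set P)) := by
        intro g' hg'
        by_cases hgg : g' = g
        · subst hgg
          rw [Function.update_self]
          exact ⟨hFvne, hgFv⟩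
        · rw [Function.update_of_ne hgg]
          exact tb.2 g' hg'
      obtain ⟨d, hdD, hdF⟩ := hDmeets ⟨Function.update tb.1 g Fv, htV⟩
      have hdg : d ⟨g, hg⟩ ∈ Fv := by
        have h2 : d ⟨g, hg⟩ ∈ Function.update (tb.1 : P → Finset P) g Fv g := hdF.1 ⟨g, hg⟩
        rwa [Function.update_self] at h2
      refine ⟨d ⟨g, hg⟩, hFvsub (subset_upperClosure hdg), ?_⟩
      exact mem_iUnion₂.mpr ⟨φ d, ⟨d, hdD, rfl⟩, hrangeφ d ⟨g, hg⟩⟩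
    have hlcF : lcF G ≤ sSup (φ '' D) :=
      SetLike.coe_subset_coe.mp
        (lowerClosure_min hGZ (closeds_isLower _))
    exact (Topology.IsScott.isLowerSet_of_isClosed h𝒞 hlcF hZ) hG𝒰
  -- assembly
  obtain ⟨t, ht⟩ := hclaim
  let Sel : Set X := {s | ∀ g, s g ∈ t.1 g.1}
  have hSelfin : Sel.Finite := Set.Finite.pi' fun g => (t.1 g.1).finite_toSet
  have hSelne : Sel.Nonempty := by
    refine ⟨fun g => (t.2 g.1 g.2).1.choose, fun g => (t.2 g.1 g.2).1.choose_spec⟩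
  refine ⟨φ '' Sel, hSelfin.image φ, hSelne.image φ, ?_, ?_⟩
  · -- interior
    set 𝒱 : Set (Closeds P) := ⋂ g ∈ G,
      {C : Closeds P | ((C : Set P) ∩
        interior ↑(upperClosure ((t.1 g : Finset P) : Set P))).Nonempty} with h𝒱def
    have h𝒱open : IsOpen 𝒱 :=
      G.finite_toSet.isOpen_biInter fun g _ => isOpen_diamond isOpen_interior
    have hA𝒱 : A ∈ 𝒱 := by
      rw [h𝒱def]
      refine mem_iInter₂.mpr fun g hg => ⟨g, hGA hg, (t.2 g hg).2⟩
    have h𝒱sub : 𝒱 ⊆ ↑(upperClosure (φ '' Sel)) := by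
      intro C hC
      have hCg : ∀ g : {g : P // g ∈ G}, ∃ x ∈ t.1 g.1, x ∈ (C : Set P) := by
        intro g
        obtain ⟨c, hcC, hcint⟩ := mem_iInter₂.mp hC g.1 g.2
        obtain ⟨x, hx, hxc⟩ := interior_subset hcint
        exact ⟨x, hx, closeds_isLower C hxc hcC⟩
      choose s hs1 hs2 using hCg
      refine ⟨φ s, mem_image_of_mem φ (fun g => hs1 g), ?_⟩
      · apply SetLike.coe_subset_coe.mp
        apply lowerClosure_min ?_ (closeds_isLower C)
        rintro _ ⟨g, rfl⟩
        exact hs2 g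
    exact interior_maximal h𝒱sub h𝒱open hA𝒱
  · rintro C ⟨_, ⟨s, hs, rfl⟩, hle⟩
    exact Topology.IsScott.isUpperSet_of_isOpen (D := Set.univ) h𝒰 hle (ht s hs)

end Infra

/-- A poset `P` is quasicontinuous iff the complete lattice `Γ(P)` of Scott closed subsets of
`P` is a quasicontinuous lattice. -/
theorem quasicontinuousPoset_iff_quasicontinuous_closeds
    {P : Type*} [PartialOrder P] [TopologicalSpace P] [Topology.IsScott P Set.univ] :
    QuasicontinuousPoset P ↔ QuasicontinuousPoset (TopologicalSpace.Closeds P) := by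
  rw [quasicontinuousPoset_iff_inst, quasicontinuousPoset_iff_inst]
  exact ⟨fun h => qc_closeds_of_qc h, fun h => qc_of_qc_closeds h⟩
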